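/- Let d ≥ 1 and let q : ℝ^d × ℝ^d → ℂ with Re q ≥ 0 satisfy: (a) for every x ∈ ℝ^d the functions ξ ↦ √|q(x,ξ)| and ξ ↦ √(Re q(x,ξ)) are subadditive on ℝ^d, and |q(x,−ξ)| = |q(x,ξ)| and Re q(x,−ξ) = Re q(x,ξ) for all ξ; (b) sup_{x∈ℝ^d} |q(x,ξ)| → 0 as ξ → 0; (c) the functions S(ξ) := sup_{x∈ℝ^d} |q(x,ξ)| and I(ξ) := inf_{x∈ℝ^d} Re q(x,ξ) are Borel measurable and radial, i.e. they depend on ξ only through |ξ|; (d) ξ ↦ √(I(ξ)) is subadditive on ℝ^d. Then: if ∫_{{|ξ|<r}} dξ / S(ξ) = ∞ holds for some r > 0, it holds for every r > 0; and if ∫_{{|ξ|<r}} dξ / I(ξ) < ∞ holds for some r > 0, it holds for every r > 0. -/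

import Mathlib

open MeasureTheory Filter Topology
open scoped ENNReal

private lemma sq_half_le {a b : ℝ≥0∞} (h : a ^ (1/2:ℝ) ≤ b ^ (1/2:ℝ)) : a ≤ b := by
  rw [one_div, ENNReal.rpow_inv_le_iff (by norm_num : (0:ℝ) < 2), ← one_div] at h
  calc a ≤ (b ^ (1/2:ℝ)) ^ (2:ℝ) := h
    _ = b := by rw [← ENNReal.rpow_mul]; norm_num

private lemma four_rpow_half : ((4:ℝ≥0∞)) ^ (1/2:ℝ) = 2 := by
  rw [show (4:ℝ≥0∞) = (2:ℝ≥0∞) ^ (2:ℕ) by norm_num, ← ENNReal.rpow_natCast,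
    ← ENNReal.rpow_mul]
  norm_num

private lemma chf_main {d : ℕ} (F : EuclideanSpace ℝ (Fin d) → ℝ≥0∞)
    (hmeas : Measurable F)
    (hsub : ∀ ξ η, F (ξ + η) ^ (1/2:ℝ) ≤ F ξ ^ (1/2:ℝ) + F η ^ (1/2:ℝ))
    (heven : ∀ ξ, F (-ξ) = F ξ)
    (h0 : Tendsto F (𝓝 0) (𝓝 0))
    {ε : ℝ} (hε : 0 < ε) (r : ℝ)
    (hfin : ∫⁻ ξ in Metric.ball (0 : EuclideanSpace ℝ (Fin d)) ε, (F ξ)⁻¹ ≠ ∞) :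
    ∫⁻ ξ in Metric.ball (0 : EuclideanSpace ℝ (Fin d)) r, (F ξ)⁻¹ ≠ ∞ := by
  -- finiteness over the closed ball of radius 2ε/3
  have hA : ∫⁻ ξ in Metric.closedBall (0:EuclideanSpace ℝ (Fin d)) (2*ε/3), (F ξ)⁻¹ ≠ ∞ :=
    ne_top_of_le_ne_top hfin
      (lintegral_mono_set (Metric.closedBall_subset_ball (show 2*ε/3 < ε by linarith)))
  -- the doubling-type pointwise lemma
  have keyP : ∀ (a' t : EuclideanSpace ℝ (Fin d)), F a' ≠ ∞ → 4 * F a' ≤ F (t - a') → F (t - a') ≤ 4 * F t := by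
    intro a' t ha' h4
    have h1 : F (t - a') ^ (1/2:ℝ) ≤ F t ^ (1/2:ℝ) + F a' ^ (1/2:ℝ) := by
      have := hsub t (-a')
      rwa [← sub_eq_add_neg, heven a'] at this
    have h2 : 2 * F a' ^ (1/2:ℝ) ≤ F (t - a') ^ (1/2:ℝ) := by
      calc 2 * F a' ^ (1/2:ℝ) = (4 * F a') ^ (1/2:ℝ) := by
            rw [ENNReal.mul_rpow_of_nonneg _ _ (by norm_num : (0:ℝ) ≤ 1/2), four_rpow_half]
        _ ≤ F (t - a') ^ (1/2:ℝ) := ENNReal.rpow_le_rpow h4 (by norm_num)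
    by_cases htop : F (t - a') = ∞
    · have hfa : F a' ^ (1/2:ℝ) ≠ ∞ := ENNReal.rpow_ne_top_of_nonneg (by norm_num) ha'
      have hFt : F t = ∞ := by
        by_contra h
        have : F t ^ (1/2:ℝ) + F a' ^ (1/2:ℝ) ≠ ∞ :=
          ENNReal.add_ne_top.2 ⟨ENNReal.rpow_ne_top_of_nonneg (by norm_num) h, hfa⟩
        rw [htop, ENNReal.top_rpow_of_pos (by norm_num)] at h1
        exact this (top_le_iff.1 h1)
      rw [hFt]
      simp
    · set z := F (t - a') ^ (1/2:ℝ) with hz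
      have hzt : z ≠ ∞ := ENNReal.rpow_ne_top_of_nonneg (by norm_num) htop
      have hc : F a' ^ (1/2:ℝ) ≤ z / 2 := by
        rw [ENNReal.le_div_iff_mul_le (Or.inl (by norm_num)) (Or.inl (by norm_num)), mul_comm]
        exact h2
      have hsubz : z - z / 2 ≤ F t ^ (1/2:ℝ) := by
        rw [tsub_le_iff_right]
        exact h1.trans (add_le_add_right hc _)
      rw [ENNReal.sub_half hzt] at hsubz
      have hz2 : z ≤ 2 * F t ^ (1/2:ℝ) := by
        have := (ENNReal.div_le_iff_le_mul (Or.inl (by norm_num : (2:ℝ≥0∞) ≠ 0))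
          (Or.inl (by norm_num : (2:ℝ≥0∞) ≠ ∞))).1 hsubz
        rwa [mul_comm] at this
      have hsq := ENNReal.rpow_le_rpow hz2 (by norm_num : (0:ℝ) ≤ 2)
      have e1 : z ^ (2:ℝ) = F (t - a') := by
        rw [hz, ← ENNReal.rpow_mul]; norm_num
      have e2 : (2 * F t ^ (1/2:ℝ)) ^ (2:ℝ) = 4 * F t := by
        rw [ENNReal.mul_rpow_of_nonneg _ _ (by norm_num : (0:ℝ) ≤ 2),
          ← ENNReal.rpow_mul (F t), ENNReal.rpow_two]
        norm_num
      exact e1 ▸ e2 ▸ hsq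
  -- finiteness over each small ball
  have key : ∀ a : EuclideanSpace ℝ (Fin d), ∫⁻ t in Metric.ball a (ε/3), (F t)⁻¹ ≠ ∞ := by
    intro a
    set W := Metric.closedBall a (ε/3) with hWdef
    obtain ⟨a', ha'W, C, hC, hbd⟩ :
        ∃ a' ∈ W, ∃ C : ℝ≥0∞, C ≠ ∞ ∧ ∀ t ∈ W, (F t)⁻¹ ≤ 4 * (F (t - a'))⁻¹ + C := by
      set m := ⨅ t ∈ W, F t with hm
      rcases eq_top_or_lt_top m with hmtop | hmlt
      · refine ⟨a, Metric.mem_closedBall_self (by positivity), 0, by simp, fun t ht => ?_⟩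
        have hFt : F t = ∞ := top_le_iff.1 (hmtop ▸ biInf_le F ht)
        simp [hFt]
      rcases eq_or_ne m 0 with hm0 | hm0
      · -- minimum value 0 : get an exact zero by compactness
        have hex : ∀ n : ℕ, ∃ t, t ∈ W ∧ F t < ((n:ℝ≥0∞)+1)⁻¹ := by
          intro n
          have hpos : (0:ℝ≥0∞) < ((n:ℝ≥0∞)+1)⁻¹ := ENNReal.inv_pos.2 (by simp)
          have : m < ((n:ℝ≥0∞)+1)⁻¹ := hm0 ▸ hpos
          rw [hm] at this
          obtain ⟨t, h⟩ := iInf_lt_iff.1 this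
          obtain ⟨ht, h⟩ := iInf_lt_iff.1 h
          exact ⟨t, ht, h⟩
        choose u huW hu using hex
        obtain ⟨a', ha'W, φ, hφ, hconv⟩ :=
          (isCompact_closedBall a (ε/3)).tendsto_subseq huW
        have hFa' : F a' = 0 := by
          have hhalf : F a' ^ (1/2:ℝ) = 0 := by
            refine le_antisymm ?_ zero_le
            refine ENNReal.le_of_forall_pos_le_add fun c hc _ => ?_
            rw [zero_add]
            have hc2 : (0:ℝ≥0∞) < ((c:ℝ≥0∞)/2) ^ (2:ℝ) :=
              ENNReal.rpow_pos (ENNReal.div_pos (by exact_mod_cast hc.ne') (by norm_num))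
                (by simp [ENNReal.div_eq_top])
            have e1 : ∀ᶠ n in atTop, F (a' - u (φ n)) < ((c:ℝ≥0∞)/2) ^ (2:ℝ) := by
              have hten : Tendsto (fun n => a' - u (φ n)) atTop (𝓝 0) := by
                have h' := (tendsto_const_nhds (x := a') (f := atTop)).sub hconv
                simpa using h'
              exact (h0.comp hten).eventually_lt_const hc2
            have e2 : ∀ᶠ n in atTop, F (u (φ n)) < ((c:ℝ≥0∞)/2) ^ (2:ℝ) := by
              obtain ⟨N, hN⟩ := ENNReal.exists_inv_nat_lt hc2.ne'
              refine eventually_atTop.2 ⟨N + 1, fun n hn => ?_⟩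
              refine lt_trans (hu (φ n)) (lt_of_le_of_lt ?_ hN)
              rw [ENNReal.inv_le_inv]
              have : (N:ℝ≥0∞) ≤ (n:ℝ≥0∞) := by exact_mod_cast Nat.le_of_succ_le hn
              refine this.trans ?_
              have hn' : (n:ℝ≥0∞) ≤ (φ n : ℝ≥0∞) := by exact_mod_cast hφ.le_apply
              exact hn'.trans le_self_add
            obtain ⟨n, h1, h2⟩ := (e1.and e2).exists
            have hs := hsub (u (φ n)) (a' - u (φ n))
            rw [show u (φ n) + (a' - u (φ n)) = a' by abel] at hs
            refine hs.trans ?_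
            have hb : ∀ y : ℝ≥0∞, y < ((c:ℝ≥0∞)/2) ^ (2:ℝ) → y ^ (1/2:ℝ) ≤ (c:ℝ≥0∞)/2 := by
              intro y hy
              refine (ENNReal.rpow_le_rpow hy.le (by norm_num : (0:ℝ) ≤ 1/2)).trans ?_
              rw [← ENNReal.rpow_mul]
              norm_num
            calc F (u (φ n)) ^ (1/2:ℝ) + F (a' - u (φ n)) ^ (1/2:ℝ)
                ≤ (c:ℝ≥0∞)/2 + (c:ℝ≥0∞)/2 := add_le_add (hb _ h2) (hb _ h1)
              _ = c := ENNReal.add_halves _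
          rcases ENNReal.rpow_eq_zero_iff.1 hhalf with ⟨h, _⟩ | ⟨_, h⟩
          · exact h
          · norm_num at h
        refine ⟨a', ha'W, 0, by simp, fun t ht => ?_⟩
        have hle : F (t - a') ≤ F t := by
          apply sq_half_le
          have hs := hsub t (-a')
          rwa [← sub_eq_add_neg, heven a', hFa',
            ENNReal.zero_rpow_of_pos (by norm_num : (0:ℝ) < 1/2), add_zero] at hs
        calc (F t)⁻¹ ≤ (F (t - a'))⁻¹ := ENNReal.inv_le_inv.2 hle
          _ = 1 * (F (t - a'))⁻¹ := (one_mul _).symm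
          _ ≤ 4 * (F (t - a'))⁻¹ + 0 := by
              rw [add_zero]; exact mul_le_mul_left (by norm_num) _
      · -- positive finite minimum
        have hm2 : m < 2 * m := by
          rw [two_mul]
          exact ENNReal.lt_add_right hmlt.ne hm0
        obtain ⟨a', ha'W, ha'⟩ : ∃ a' ∈ W, F a' < 2 * m := by
          have := hm2
          rw [hm] at this
          obtain ⟨a', h⟩ := iInf_lt_iff.1 this
          obtain ⟨hW, h⟩ := iInf_lt_iff.1 h
          exact ⟨a', hW, h⟩
        have ha'top : F a' ≠ ∞ :=
          (ha'.trans_le (le_top.trans_eq (by simp [ENNReal.mul_top hm0] ))).ne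
        refine ⟨a', ha'W, m⁻¹, ENNReal.inv_ne_top.2 hm0, fun t ht => ?_⟩
        by_cases h4 : 4 * F a' ≤ F (t - a')
        · have hP := keyP a' t ha'top h4
          have h5 : (4 * F t)⁻¹ ≤ (F (t - a'))⁻¹ := ENNReal.inv_le_inv.2 hP
          have h6 : (F t)⁻¹ ≤ 4 * (F (t - a'))⁻¹ := by
            calc (F t)⁻¹ = 4 * (4 * F t)⁻¹ := by
                  rw [ENNReal.mul_inv (Or.inl (by norm_num)) (Or.inl (by norm_num)),
                    ← mul_assoc, ENNReal.mul_inv_cancel (by norm_num) (by norm_num), one_mul]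
              _ ≤ 4 * (F (t - a'))⁻¹ := mul_le_mul_right h5 4
          exact h6.trans le_self_add
        · have hmle : m ≤ F t := biInf_le F ht
          exact (ENNReal.inv_le_inv.2 hmle).trans le_add_self
    -- now integrate the pointwise bound over the window
    have hmeas' : Measurable fun t : EuclideanSpace ℝ (Fin d) => 4 * (F (t - a'))⁻¹ + C :=
      (((hmeas.comp (measurable_sub_const a')).inv).const_mul 4).add_const C
    have step2 : ∫⁻ t in W, (F t)⁻¹ ≤ 4 * (∫⁻ t in W, (F (t - a'))⁻¹) + C * volume W := by
      calc ∫⁻ t in W, (F t)⁻¹ ≤ ∫⁻ t in W, (4 * (F (t - a'))⁻¹ + C) :=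
            setLIntegral_mono hmeas' hbd
        _ = (∫⁻ t in W, 4 * (F (t - a'))⁻¹) + ∫⁻ t in W, C :=
            lintegral_add_right _ measurable_const
        _ = 4 * (∫⁻ t in W, (F (t - a'))⁻¹) + C * volume W := by
            rw [lintegral_const_mul' 4 _ (by norm_num), setLIntegral_const]
    have step3 : ∫⁻ t in W, (F (t - a'))⁻¹
        ≤ ∫⁻ ξ in Metric.closedBall (0:EuclideanSpace ℝ (Fin d)) (2*ε/3), (F ξ)⁻¹ := by
      have hmp : MeasurePreserving (fun t : EuclideanSpace ℝ (Fin d) => t + a') volume volume :=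
        measurePreserving_add_right volume a'
      have hemb : MeasurableEmbedding (fun t : EuclideanSpace ℝ (Fin d) => t + a') :=
        (Homeomorph.addRight a').measurableEmbedding
      rw [← hmp.setLIntegral_comp_preimage_emb hemb (fun y => (F (y - a'))⁻¹) W]
      simp only [add_sub_cancel_right]
      refine lintegral_mono_set ?_
      intro x hx
      simp only [Set.mem_preimage, hWdef, Metric.mem_closedBall] at hx ⊢
      have h1 : dist x (0:EuclideanSpace ℝ (Fin d)) = dist (x + a') a' := by
        rw [← dist_add_right x 0 a', zero_add]
      have h2 : dist (x + a') a' ≤ dist (x + a') a + dist a a' := dist_triangle _ _ _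
      have h3 : dist a a' ≤ ε/3 := by
        rw [dist_comm]; exact ha'W
      rw [h1]
      linarith
    have hfinW : 4 * (∫⁻ t in W, (F (t - a'))⁻¹) + C * volume W ≠ ∞ := by
      refine ENNReal.add_ne_top.2 ⟨ENNReal.mul_ne_top (by norm_num)
        (ne_top_of_le_ne_top hA step3), ENNReal.mul_ne_top hC ?_⟩
      exact measure_closedBall_lt_top.ne
    exact ne_top_of_le_ne_top hfinW
      ((lintegral_mono_set Metric.ball_subset_closedBall).trans step2)
  -- cover the big ball by finitely many small balls
  obtain ⟨s, hs⟩ := (isCompact_closedBall (0:EuclideanSpace ℝ (Fin d)) r).elim_finite_subcover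
    (fun a : EuclideanSpace ℝ (Fin d) => Metric.ball a (ε/3)) (fun _ => Metric.isOpen_ball)
    (fun x _ => Set.mem_iUnion.2 ⟨x, Metric.mem_ball_self (by positivity)⟩)
  have hle : ∫⁻ ξ in Metric.ball (0:EuclideanSpace ℝ (Fin d)) r, (F ξ)⁻¹
      ≤ ∑ a ∈ s, ∫⁻ t in Metric.ball a (ε/3), (F t)⁻¹ := by
    refine le_trans (lintegral_mono_set (Metric.ball_subset_closedBall.trans hs)) ?_
    have hU : (⋃ i ∈ s, Metric.ball i (ε/3)) = ⋃ i : {x // x ∈ s}, Metric.ball (i : EuclideanSpace ℝ (Fin d)) (ε/3) := by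
      simp [Set.iUnion_subtype]
    rw [hU]
    refine (lintegral_iUnion_le _ _).trans ?_
    rw [tsum_fintype]
    exact le_of_eq (Finset.sum_coe_sort s (fun a => ∫⁻ t in Metric.ball a (ε/3), (F t)⁻¹))
  exact ne_top_of_le_ne_top
    (ENNReal.sum_lt_top.2 fun a _ => lt_top_iff_ne_top.2 (key a)).ne hle
theorem stmt1 (d : ℕ) (hd : 1 ≤ d)
    (q : EuclideanSpace ℝ (Fin d) → EuclideanSpace ℝ (Fin d) → ℂ)
    (hre : ∀ x ξ, 0 ≤ (q x ξ).re)
    -- (a) subadditivity and evenness, for each frozen x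
    (hsub_abs : ∀ x ξ η, Real.sqrt (‖q x (ξ + η)‖) ≤
      Real.sqrt (‖q x ξ‖) + Real.sqrt (‖q x η‖))
    (hsub_re : ∀ x ξ η, Real.sqrt ((q x (ξ + η)).re) ≤
      Real.sqrt ((q x ξ).re) + Real.sqrt ((q x η).re))
    (heven_abs : ∀ x ξ, ‖q x (-ξ)‖ = ‖q x ξ‖)
    (heven_re : ∀ x ξ, (q x (-ξ)).re = (q x ξ).re)
    -- (b) sup_x |q(x,ξ)| → 0 as ξ → 0
    (hlim : Tendsto (fun ξ => ⨆ x, ENNReal.ofReal (‖q x ξ‖))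
      (𝓝 (0 : EuclideanSpace ℝ (Fin d))) (𝓝 0))
    -- (c) measurability and radiality of S and I
    (hSmeas : Measurable fun ξ : EuclideanSpace ℝ (Fin d) =>
      ⨆ x, ENNReal.ofReal (‖q x ξ‖))
    (hImeas : Measurable fun ξ : EuclideanSpace ℝ (Fin d) =>
      ⨅ x, ENNReal.ofReal ((q x ξ).re))
    (gS gI : ℝ → ℝ≥0∞)
    (hSrad : ∀ ξ : EuclideanSpace ℝ (Fin d),
      (⨆ x, ENNReal.ofReal (‖q x ξ‖)) = gS ‖ξ‖)
    (hIrad : ∀ ξ : EuclideanSpace ℝ (Fin d),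
      (⨅ x, ENNReal.ofReal ((q x ξ).re)) = gI ‖ξ‖)
    -- (d) √I is subadditive
    (hIsub : ∀ ξ η : EuclideanSpace ℝ (Fin d),
      ((⨅ x, ENNReal.ofReal ((q x (ξ + η)).re)) ^ (1/2 : ℝ)) ≤
        ((⨅ x, ENNReal.ofReal ((q x ξ).re)) ^ (1/2 : ℝ)) +
        ((⨅ x, ENNReal.ofReal ((q x η).re)) ^ (1/2 : ℝ))) :
    ((∃ r > (0 : ℝ), ∫⁻ ξ in Metric.ball (0 : EuclideanSpace ℝ (Fin d)) r,
        (⨆ x, ENNReal.ofReal (‖q x ξ‖))⁻¹ = ∞) →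
      ∀ r > (0 : ℝ), ∫⁻ ξ in Metric.ball (0 : EuclideanSpace ℝ (Fin d)) r,
        (⨆ x, ENNReal.ofReal (‖q x ξ‖))⁻¹ = ∞) ∧
    ((∃ r > (0 : ℝ), ∫⁻ ξ in Metric.ball (0 : EuclideanSpace ℝ (Fin d)) r,
        (⨅ x, ENNReal.ofReal ((q x ξ).re))⁻¹ < ∞) →
      ∀ r > (0 : ℝ), ∫⁻ ξ in Metric.ball (0 : EuclideanSpace ℝ (Fin d)) r,
        (⨅ x, ENNReal.ofReal ((q x ξ).re))⁻¹ < ∞) := by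
  set S : EuclideanSpace ℝ (Fin d) → ℝ≥0∞ :=
    fun ξ => ⨆ x, ENNReal.ofReal (‖q x ξ‖) with hS
  set I : EuclideanSpace ℝ (Fin d) → ℝ≥0∞ :=
    fun ξ => ⨅ x, ENNReal.ofReal ((q x ξ).re) with hI
  have hofsq : ∀ a : ℝ, 0 ≤ a →
      ENNReal.ofReal a = (ENNReal.ofReal (Real.sqrt a)) ^ (2:ℝ) := by
    intro a ha
    rw [ENNReal.ofReal_rpow_of_nonneg (Real.sqrt_nonneg a) (by norm_num : (0:ℝ) ≤ 2)]
    congr 1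
    rw [Real.rpow_two, Real.sq_sqrt ha]
  have hle_half : ∀ (a : ℝ) (T : ℝ≥0∞), 0 ≤ a → ENNReal.ofReal a ≤ T →
      ENNReal.ofReal (Real.sqrt a) ≤ T ^ (1/2:ℝ) := by
    intro a T ha h
    rw [Real.sqrt_eq_rpow, ← ENNReal.ofReal_rpow_of_nonneg ha (by norm_num : (0:ℝ) ≤ 1/2)]
    exact ENNReal.rpow_le_rpow h (by norm_num)
  have hSle : ∀ ξ x, ENNReal.ofReal (‖q x ξ‖) ≤ S ξ := by
    intro ξ x; rw [hS]; exact le_iSup (fun x => ENNReal.ofReal (‖q x ξ‖)) x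
  have hIge : ∀ ξ x, I ξ ≤ ENNReal.ofReal ((q x ξ).re) := by
    intro ξ x; rw [hI]; exact iInf_le (fun x => ENNReal.ofReal ((q x ξ).re)) x
  have hSsub : ∀ ξ η, S (ξ + η) ^ (1/2:ℝ) ≤ S ξ ^ (1/2:ℝ) + S η ^ (1/2:ℝ) := by
    intro ξ η
    rw [one_div, ENNReal.rpow_inv_le_iff (by norm_num : (0:ℝ) < 2), ← one_div,
      show S (ξ+η) = ⨆ x, ENNReal.ofReal (‖q x (ξ + η)‖) from by rw [hS]]
    refine iSup_le fun x => ?_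
    rw [hofsq _ (norm_nonneg _)]
    refine ENNReal.rpow_le_rpow ?_ (by norm_num)
    calc ENNReal.ofReal (Real.sqrt (‖q x (ξ+η)‖))
        ≤ ENNReal.ofReal (Real.sqrt (‖q x ξ‖) +
            Real.sqrt (‖q x η‖)) :=
          ENNReal.ofReal_le_ofReal (hsub_abs x ξ η)
      _ = ENNReal.ofReal (Real.sqrt (‖q x ξ‖)) +
            ENNReal.ofReal (Real.sqrt (‖q x η‖)) :=
          ENNReal.ofReal_add (Real.sqrt_nonneg _) (Real.sqrt_nonneg _)
      _ ≤ S ξ ^ (1/2:ℝ) + S η ^ (1/2:ℝ) :=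
          add_le_add (hle_half _ _ (norm_nonneg _) (hSle ξ x))
            (hle_half _ _ (norm_nonneg _) (hSle η x))
  have hSeven : ∀ ξ, S (-ξ) = S ξ := by
    intro ξ; simp only [hS]; simp [heven_abs]
  have hIeven : ∀ ξ, I (-ξ) = I ξ := by
    intro ξ; simp only [hI]; simp [heven_re]
  have hIle : ∀ ξ, I ξ ≤ S ξ := by
    intro ξ
    exact (hIge ξ 0).trans
      ((ENNReal.ofReal_le_ofReal (Complex.re_le_norm _)).trans (hSle ξ 0))
  have hI0 : Tendsto I (𝓝 0) (𝓝 0) :=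
    tendsto_of_tendsto_of_tendsto_of_le_of_le tendsto_const_nhds hlim
      (fun ξ => zero_le) hIle
  constructor
  · rintro ⟨r₀, hr₀, h⟩ r hr
    by_contra hne
    exact chf_main S hSmeas hSsub hSeven hlim hr r₀ hne h
  · rintro ⟨r₀, hr₀, h⟩ r hr
    exact lt_top_iff_ne_top.2
      (chf_main I hImeas hIsub hIeven hI0 hr₀ r (lt_top_iff_ne_top.1 h))
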